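/- Let a > 0, b > 0, c > 0 be real numbers, set f(x) = a·x² + b·x − x³, and let x₀ = (a + √(a² + 3b))/3 be the positive root of 3x² = 2a·x + b. Then: (i) if c > f(x₀), there is no real x > 0 with f(x) = c; (ii) if c = f(x₀), then x₀ is the unique positive real x with f(x) = c; (iii) if c < f(x₀), there exist exactly two positive real numbers x₁ < x₂ with f(x₁) = f(x₂) = c, and they satisfy 0 < x₁ < x₀ < x₂. -/

import Mathlib

/-- Al-Tūsī's equation (25): a·x² + b·x − x³ = c has no, one, or exactly two positive
roots according as c is greater than, equal to, or less than the maximum value f(x₀),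
where x₀ = (a + √(a² + 3b))/3. -/
theorem tusi_eq25_roots (a b c x₀ : ℝ) (ha : 0 < a) (hb : 0 < b) (hc : 0 < c)
    (hx₀ : x₀ = (a + Real.sqrt (a ^ 2 + 3 * b)) / 3) :
    (a * x₀ ^ 2 + b * x₀ - x₀ ^ 3 < c →
      ¬ ∃ x : ℝ, 0 < x ∧ a * x ^ 2 + b * x - x ^ 3 = c) ∧
    (c = a * x₀ ^ 2 + b * x₀ - x₀ ^ 3 →
      (a * x₀ ^ 2 + b * x₀ - x₀ ^ 3 = c ∧
        ∀ x : ℝ, 0 < x → a * x ^ 2 + b * x - x ^ 3 = c → x = x₀)) ∧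
    (c < a * x₀ ^ 2 + b * x₀ - x₀ ^ 3 →
      ∃ x₁ x₂ : ℝ, 0 < x₁ ∧ x₁ < x₂ ∧ x₁ < x₀ ∧ x₀ < x₂ ∧
        a * x₁ ^ 2 + b * x₁ - x₁ ^ 3 = c ∧ a * x₂ ^ 2 + b * x₂ - x₂ ^ 3 = c ∧
        ∀ x : ℝ, 0 < x → a * x ^ 2 + b * x - x ^ 3 = c → (x = x₁ ∨ x = x₂)) := by
  have hs2 : Real.sqrt (a ^ 2 + 3 * b) ^ 2 = a ^ 2 + 3 * b := Real.sq_sqrt (by positivity)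
  have hsnn : 0 ≤ Real.sqrt (a ^ 2 + 3 * b) := Real.sqrt_nonneg _
  have hsa : a < Real.sqrt (a ^ 2 + 3 * b) := by nlinarith
  have hx0pos : 0 < x₀ := by rw [hx₀]; positivity
  have hkey : 3 * x₀ ^ 2 = 2 * a * x₀ + b := by rw [hx₀]; field_simp; nlinarith
  have h3x0 : 2 * a < 3 * x₀ := by rw [hx₀]; linarith
  set f : ℝ → ℝ := fun x => a * x ^ 2 + b * x - x ^ 3 with hf
  have hfc : Continuous f := by fun_prop
  have hd : ∀ x : ℝ, HasDerivAt f (2 * a * x + b - 3 * x ^ 2) x := by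
    intro x
    have h1 : HasDerivAt (fun x : ℝ => a * x ^ 2) (a * (2 * x ^ 1)) x :=
      (hasDerivAt_pow 2 x).const_mul a
    have h2 : HasDerivAt (fun x : ℝ => b * x) (b * 1) x := (hasDerivAt_id x).const_mul b
    have h3 : HasDerivAt (fun x : ℝ => x ^ 3) (3 * x ^ 2) x := by
      simpa using hasDerivAt_pow 3 x
    have := (h1.add h2).sub h3
    exact this.congr_deriv (by ring)
  have hmono : StrictMonoOn f (Set.Icc 0 x₀) := by
    apply strictMonoOn_of_deriv_pos (convex_Icc _ _) hfc.continuousOn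
    intro x hx
    rw [interior_Icc] at hx
    rw [(hd x).deriv]
    nlinarith [hx.1, hx.2, mul_pos (sub_pos.mpr hx.2) (by linarith [hx.1] : (0:ℝ) < 3 * (x₀ + x) - 2 * a)]
  have hanti : StrictAntiOn f (Set.Ici x₀) := by
    apply strictAntiOn_of_deriv_neg (convex_Ici _) hfc.continuousOn
    intro x hx
    rw [interior_Ici] at hx
    rw [(hd x).deriv]
    rw [Set.mem_Ioi] at hx
    nlinarith [mul_pos (sub_pos.mpr hx) (by linarith : (0:ℝ) < 3 * (x + x₀) - 2 * a)]
  have hmax : ∀ x : ℝ, 0 < x → x ≠ x₀ → f x < f x₀ := by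
    intro x hx hne
    have h1 : 0 < (x - x₀) ^ 2 := pow_two_pos_of_ne_zero (sub_ne_zero.mpr hne)
    have h2 : 0 < x + 2 * x₀ - a := by linarith
    have : f x₀ - f x = (x - x₀) ^ 2 * (x + 2 * x₀ - a) := by
      simp only [hf]; nlinarith [hkey]
    nlinarith [mul_pos h1 h2]
  refine ⟨?_, ?_, ?_⟩
  · rintro hlt ⟨x, hx, hfx⟩
    rcases eq_or_ne x x₀ with rfl | hne
    · linarith
    · have := hmax x hx hne
      simp only [hf] at this
      linarith
  · intro hceq
    refine ⟨hceq.symm, fun x hx hfx => ?_⟩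
    by_contra hne
    have := hmax x hx hne
    simp only [hf] at this
    linarith
  · intro hlt
    have hf0 : f 0 = 0 := by simp [hf]
    -- first root on [0, x₀]
    have hsub : Set.Icc (f 0) (f x₀) ⊆ f '' Set.Icc 0 x₀ :=
      intermediate_value_Icc hx0pos.le hfc.continuousOn
    obtain ⟨x₁, hx₁mem, hfx₁⟩ := hsub ⟨by rw [hf0]; exact hc.le, le_of_lt hlt⟩
    have hx₁pos : 0 < x₁ := by
      rcases lt_or_eq_of_le hx₁mem.1 with h | h
      · exact h
      · exfalso; rw [← h] at hfx₁; rw [hf0] at hfx₁; linarith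
    have hx₁lt : x₁ < x₀ := by
      rcases lt_or_eq_of_le hx₁mem.2 with h | h
      · exact h
      · exfalso; rw [h] at hfx₁; simp only [hf] at hfx₁; linarith
    -- second root on [x₀, M]
    set M : ℝ := x₀ + a + b + c + 1 with hM
    have hMx₀ : x₀ < M := by simp only [hM]; linarith
    have hfM : f M < c := by
      simp only [hf, hM]
      nlinarith [hx0pos, mul_pos ha hb, mul_pos ha hc, mul_pos hb hc,
        mul_pos hx0pos ha, mul_pos hx0pos hb, mul_pos hx0pos hc, sq_nonneg x₀,
        mul_pos (mul_pos ha hb) hc, sq_nonneg (x₀ + b), sq_nonneg (x₀ + c)]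
    have hsub2 : Set.Icc (f M) (f x₀) ⊆ f '' Set.Icc x₀ M :=
      intermediate_value_Icc' hMx₀.le hfc.continuousOn
    obtain ⟨x₂, hx₂mem, hfx₂⟩ := hsub2 ⟨hfM.le, hlt.le⟩
    have hx₂gt : x₀ < x₂ := by
      rcases lt_or_eq_of_le hx₂mem.1 with h | h
      · exact h
      · exfalso; rw [← h] at hfx₂; simp only [hf] at hfx₂; linarith
    refine ⟨x₁, x₂, hx₁pos, lt_trans hx₁lt hx₂gt, hx₁lt, hx₂gt, hfx₁, hfx₂, ?_⟩
    intro x hx hfx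
    have hne : x ≠ x₀ := by
      rintro rfl
      simp only [hf] at *
      linarith
    rcases lt_or_gt_of_ne hne with h | h
    · left
      exact hmono.injOn ⟨hx.le, h.le⟩ ⟨hx₁mem.1, hx₁mem.2⟩ (hfx.trans hfx₁.symm)
    · right
      exact hanti.injOn (Set.mem_Ici.mpr h.le) (Set.mem_Ici.mpr hx₂gt.le)
        (hfx.trans hfx₂.symm)
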